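/- Let f be a nonzero polynomial in n variables of total degree at most d over a finite field F with q elements. If (a_1,…,a_n) is chosen uniformly at random from F^n, then the probability that f(a_1,…,a_n) = 0 is at most d/q. -/

import Mathlib

open Finset MvPolynomial

private lemma sz_univariate {F : Type*} [Field F] [Fintype F] [DecidableEq F]
    {Q : Polynomial F} (hQ : Q ≠ 0) :
    (Finset.univ.filter fun y : F => Polynomial.eval y Q = 0).card ≤ Q.natDegree := by
  calc (Finset.univ.filter fun y : F => Polynomial.eval y Q = 0).card
      ≤ Q.roots.toFinset.card := by
        apply Finset.card_le_card
        intro y hy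
        simp only [Finset.mem_filter] at hy
        simp [Polynomial.mem_roots, hQ, Polynomial.IsRoot, hy.2]
    _ ≤ Multiset.card Q.roots := Q.roots.toFinset_card_le
    _ ≤ Q.natDegree := Q.card_roots'

private lemma sz_card {F : Type*} [Field F] [Fintype F] [DecidableEq F] :
    ∀ (n : ℕ) (f : MvPolynomial (Fin n) F), f ≠ 0 →
      (Finset.univ.filter fun x : Fin n → F => MvPolynomial.eval x f = 0).card * Fintype.card F
        ≤ f.totalDegree * Fintype.card F ^ n := by
  intro n
  induction n with
  | zero =>
      intro f hf
      obtain ⟨a, rfl⟩ := MvPolynomial.C_surjective (Fin 0) f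
      have ha : a ≠ 0 := fun h => hf (by rw [h, map_zero])
      have : (Finset.univ.filter fun x : Fin 0 → F => MvPolynomial.eval x (C a) = 0) = ∅ := by
        apply Finset.filter_false_of_mem
        intro x _
        simp only [MvPolynomial.eval_C]
        exact ha
      simp [this, ha]
  | succ n ih =>
      intro f hf
      set q := Fintype.card F with hq
      set p := finSuccEquiv F n f with hpdef
      have hp : p ≠ 0 := by
        intro h
        exact hf ((map_eq_zero_iff _ (finSuccEquiv F n).injective).mp h)
      set k := p.natDegree with hk
      set lead := p.leadingCoeff with hlead
      have hlead0 : lead ≠ 0 := Polynomial.leadingCoeff_ne_zero.mpr hp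
      have hdeg : lead.totalDegree + k ≤ f.totalDegree := by
        have := totalDegree_coeff_finSuccEquiv_add_le f k (by
          rwa [← Polynomial.leadingCoeff, ← hlead])
        exact this
      -- fiberwise counting
      have hcount :
          (Finset.univ.filter fun x : Fin (n+1) → F => MvPolynomial.eval x f = 0).card
            = ∑ t : Fin n → F,
              (Finset.univ.filter fun y : F =>
                MvPolynomial.eval (Fin.cons y t) f = 0).card := by
        rw [Finset.card_eq_sum_card_fiberwise
          (f := fun x : Fin (n+1) → F => Fin.tail x) (t := Finset.univ)
          (fun x _ => Finset.mem_univ _)]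
        apply Finset.sum_congr rfl
        intro t _
        apply Finset.card_nbij' (fun x => x 0) (fun y => Fin.cons y t)
        · intro x hx
          simp only [Finset.mem_coe, Finset.mem_filter, Finset.mem_univ, true_and] at hx ⊢
          rw [← hx.2, Fin.cons_self_tail]
          exact hx.1
        · intro y hy
          simp only [Finset.mem_coe, Finset.mem_filter, Finset.mem_univ, true_and] at hy ⊢
          refine ⟨hy, ?_⟩
          exact Fin.tail_cons _ _
        · intro x hx
          simp only [Finset.mem_coe, Finset.mem_filter, Finset.mem_univ, true_and] at hx
          rw [← hx.2]
          exact Fin.cons_self_tail x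
        · intro y _
          exact Fin.cons_zero _ _
      -- bound each fiber
      have hfiber : ∀ t : Fin n → F,
          (Finset.univ.filter fun y : F =>
              MvPolynomial.eval (Fin.cons y t) f = 0).card
            ≤ if MvPolynomial.eval t lead = 0 then q else k := by
        intro t
        by_cases ht : MvPolynomial.eval t lead = 0
        · simp only [ht, if_true]
          exact (Finset.card_filter_le _ _).trans (by simp [hq])
        · simp only [ht, if_false]
          set Q := p.map (MvPolynomial.eval t : MvPolynomial (Fin n) F →+* F) with hQdef
          have hQ : Q ≠ 0 := by
            intro h
            apply ht
            have : Q.coeff k = 0 := by rw [h]; simp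
            rwa [hQdef, Polynomial.coeff_map] at this
          have heq : ∀ y : F, MvPolynomial.eval (Fin.cons y t) f = Polynomial.eval y Q := by
            intro y
            rw [hQdef, hpdef]
            exact eval_eq_eval_mv_eval' t y f
          calc (Finset.univ.filter fun y : F =>
                MvPolynomial.eval (Fin.cons y t) f = 0).card
              = (Finset.univ.filter fun y : F => Polynomial.eval y Q = 0).card := by
                congr 1
                ext y
                simp [heq]
            _ ≤ Q.natDegree := sz_univariate hQ
            _ ≤ k := Polynomial.natDegree_map_le
      -- sum the bounds
      set A := (Finset.univ.filter fun t : Fin n → F => MvPolynomial.eval t lead = 0).card with hA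
      have hsum :
          (∑ t : Fin n → F,
            (Finset.univ.filter fun y : F =>
              MvPolynomial.eval (Fin.cons y t) f = 0).card)
            ≤ A * q + q ^ n * k := by
        calc (∑ t : Fin n → F,
              (Finset.univ.filter fun y : F =>
                MvPolynomial.eval (Fin.cons y t) f = 0).card)
            ≤ ∑ t : Fin n → F, (if MvPolynomial.eval t lead = 0 then q else k) :=
              Finset.sum_le_sum fun t _ => hfiber t
          _ = A * q + (Finset.univ.filter fun t : Fin n → F =>
                ¬ MvPolynomial.eval t lead = 0).card * k := by
              rw [Finset.sum_ite, Finset.sum_const, Finset.sum_const, smul_eq_mul, smul_eq_mul]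
          _ ≤ A * q + q ^ n * k := by
              gcongr
              calc (Finset.univ.filter fun t : Fin n → F =>
                    ¬ MvPolynomial.eval t lead = 0).card
                  ≤ (Finset.univ : Finset (Fin n → F)).card := Finset.card_filter_le _ _
                _ = q ^ n := by simp [hq, Fintype.card_fun]
      have hIH : A * q ≤ lead.totalDegree * q ^ n := ih lead hlead0
      calc (Finset.univ.filter fun x : Fin (n+1) → F =>
              MvPolynomial.eval x f = 0).card * q
          ≤ (A * q + q ^ n * k) * q := by
            rw [hcount]; exact Nat.mul_le_mul_right q hsum
        _ = A * q * q + k * q ^ (n+1) := by ring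
        _ ≤ lead.totalDegree * q ^ n * q + k * q ^ (n+1) := by gcongr
        _ = (lead.totalDegree + k) * q ^ (n+1) := by ring
        _ ≤ f.totalDegree * q ^ (n+1) := Nat.mul_le_mul_right _ hdeg

open scoped Classical in
/-- If `f` is a nonzero multivariate polynomial of total degree at most `d` over a
finite field `F` with `q` elements, the probability that a uniformly random point of
`F^n` is a root of `f` is at most `d / q`. -/
theorem schwartz_zippel_prob_root
    (F : Type*) [Field F] [Fintype F] (n d : ℕ)
    (f : MvPolynomial (Fin n) F) (hf : f ≠ 0) (hd : f.totalDegree ≤ d) :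
    ((Finset.univ.filter fun x : Fin n → F => MvPolynomial.eval x f = 0).card : ℚ)
        / (Fintype.card (Fin n → F) : ℚ)
      ≤ (d : ℚ) / (Fintype.card F : ℚ) := by
  have hq : 0 < Fintype.card F := Fintype.card_pos
  have hqn : 0 < Fintype.card (Fin n → F) := Fintype.card_pos
  rw [div_le_div_iff₀ (by exact_mod_cast hqn) (by exact_mod_cast hq)]
  have key := sz_card n f hf
  have h2 : (Finset.univ.filter fun x : Fin n → F =>
      MvPolynomial.eval x f = 0).card * Fintype.card F ≤ d * Fintype.card F ^ n :=
    key.trans (Nat.mul_le_mul_right _ hd)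
  have hcard : Fintype.card (Fin n → F) = Fintype.card F ^ n := by
    simp [Fintype.card_fun]
  calc ((Finset.univ.filter fun x : Fin n → F =>
          MvPolynomial.eval x f = 0).card : ℚ) * (Fintype.card F : ℚ)
      ≤ ((d : ℚ) * (Fintype.card F : ℚ) ^ n) := by exact_mod_cast h2
    _ = (d : ℚ) * (Fintype.card (Fin n → F) : ℚ) := by rw [hcard]; push_cast; ring
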